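/- Let A ∈ ℝ^{n×n}, B ∈ ℝ^{n×m}, let Q ∈ ℝ^{n×n} and R ∈ ℝ^{m×m} be positive definite, and let P ∈ ℝ^{n×n} be a symmetric positive definite matrix satisfying the algebraic Riccati equation AᵀP + PA − P B R⁻¹ Bᵀ P + Q = 0. Define a(x) = xᵀPAx and b(x) = xᵀPB. Then for every x ∈ ℝⁿ the Sontag-type control law satisfies u_S(x) = −R⁻¹BᵀPx, i.e. it coincides with the LQR feedback. (In particular, λ(x) = 1 whenever b(x) ≠ 0.) -/

import Mathlib

open Matrix

/-- The Sontag-type distortion factor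
`λ = (a + √(a² + q·(b R⁻¹ bᵀ))) / (b R⁻¹ bᵀ)`, where `q = xᵀQx` is passed in as
a scalar and `b` is a row vector (represented as `Fin m → ℝ`). -/
noncomputable def sontagLambda {m : ℕ} (R : Matrix (Fin m) (Fin m) ℝ)
    (a q : ℝ) (b : Fin m → ℝ) : ℝ :=
  (a + Real.sqrt (a ^ 2 + q * (b ⬝ᵥ R⁻¹ *ᵥ b))) / (b ⬝ᵥ R⁻¹ *ᵥ b)

/-- The Sontag-type control law `u_S = −λ R⁻¹ bᵀ` if `b ≠ 0`, and `u_S = 0` if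
`b = 0`. -/
noncomputable def sontagControl {m : ℕ} (R : Matrix (Fin m) (Fin m) ℝ)
    (a q : ℝ) (b : Fin m → ℝ) : Fin m → ℝ :=
  if b = 0 then 0 else -(sontagLambda R a q b) • (R⁻¹ *ᵥ b)

/-- for the LTI system `(A, B)` with `P ≻ 0` symmetric solving the
algebraic Riccati equation, using the CLF `V(x) = ½xᵀPx` (so `a(x) = xᵀPAx`,
`b(x) = xᵀPB`, `q(x) = xᵀQx`), the Sontag-type control law coincides with the
LQR feedback `u_S(x) = −R⁻¹BᵀPx` for every `x`; in particular `λ(x) = 1`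
whenever `b(x) ≠ 0`. -/
theorem stmt_0 {n m : ℕ}
    (A : Matrix (Fin n) (Fin n) ℝ) (B : Matrix (Fin n) (Fin m) ℝ)
    (Q : Matrix (Fin n) (Fin n) ℝ) (R : Matrix (Fin m) (Fin m) ℝ)
    (P : Matrix (Fin n) (Fin n) ℝ)
    (hQ : Q.PosDef) (hR : R.PosDef) (hP : P.PosDef) (hPsymm : Pᵀ = P)
    (hRic : Aᵀ * P + P * A - P * B * R⁻¹ * Bᵀ * P + Q = 0) :
    (∀ x : Fin n → ℝ,
        sontagControl R (x ⬝ᵥ (P * A) *ᵥ x) (x ⬝ᵥ Q *ᵥ x) (x ᵥ* (P * B)) =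
          -((R⁻¹ * Bᵀ * P) *ᵥ x)) ∧
    (∀ x : Fin n → ℝ, x ᵥ* (P * B) ≠ 0 →
        sontagLambda R (x ⬝ᵥ (P * A) *ᵥ x) (x ⬝ᵥ Q *ᵥ x) (x ᵥ* (P * B)) = 1) := by
  -- Riccati rearranged
  have hM : P * B * R⁻¹ * Bᵀ * P = Aᵀ * P + P * A + Q := by
    have h : Aᵀ * P + P * A + Q - P * B * R⁻¹ * Bᵀ * P = 0 := by rw [← hRic]; abel
    rw [eq_comm, ← sub_eq_zero]; rw [← h]
  have hb : ∀ x : Fin n → ℝ, x ᵥ* (P * B) = (Bᵀ * P) *ᵥ x := fun x => by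
    rw [← mulVec_transpose, transpose_mul, hPsymm]
  -- the key scalar identity: s = 2a + q
  have key : ∀ x : Fin n → ℝ,
      (x ᵥ* (P * B)) ⬝ᵥ R⁻¹ *ᵥ (x ᵥ* (P * B)) =
        2 * (x ⬝ᵥ (P * A) *ᵥ x) + x ⬝ᵥ Q *ᵥ x := by
    intro x
    have hs : (x ᵥ* (P * B)) ⬝ᵥ R⁻¹ *ᵥ (x ᵥ* (P * B)) =
        x ⬝ᵥ (P * B * R⁻¹ * Bᵀ * P) *ᵥ x := by
      conv_lhs => rw [show R⁻¹ *ᵥ (x ᵥ* (P * B)) = R⁻¹ *ᵥ ((Bᵀ * P) *ᵥ x) from by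
        rw [hb]]
      simp only [dotProduct_mulVec, vecMul_vecMul, mulVec_mulVec, Matrix.mul_assoc]
    have ha : x ⬝ᵥ (Aᵀ * P) *ᵥ x = x ⬝ᵥ (P * A) *ᵥ x := by
      rw [dotProduct_mulVec, ← mulVec_transpose, transpose_mul, transpose_transpose,
        hPsymm, dotProduct_comm]
    rw [hs, hM, add_mulVec, add_mulVec, dotProduct_add, dotProduct_add, ha]
    ring
  -- λ = 1 when b ≠ 0
  have hlam : ∀ x : Fin n → ℝ, x ᵥ* (P * B) ≠ 0 →
      sontagLambda R (x ⬝ᵥ (P * A) *ᵥ x) (x ⬝ᵥ Q *ᵥ x) (x ᵥ* (P * B)) = 1 := by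
    intro x hx
    have hspos : 0 < (x ᵥ* (P * B)) ⬝ᵥ R⁻¹ *ᵥ (x ᵥ* (P * B)) := by
      have := hR.inv.re_dotProduct_pos hx
      simpa using this
    have hqnn : 0 ≤ x ⬝ᵥ Q *ᵥ x := by
      have := hQ.posSemidef.re_dotProduct_nonneg x
      simpa using this
    set a := x ⬝ᵥ (P * A) *ᵥ x with ha
    set q := x ⬝ᵥ Q *ᵥ x with hq
    set s := (x ᵥ* (P * B)) ⬝ᵥ R⁻¹ *ᵥ (x ᵥ* (P * B)) with hsdef
    have hkey : s = 2 * a + q := key x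
    have hsqrt : Real.sqrt (a ^ 2 + q * s) = s - a := by
      have h1 : a ^ 2 + q * s = (s - a) ^ 2 := by rw [hkey]; ring
      rw [h1, Real.sqrt_sq (by linarith)]
    unfold sontagLambda
    rw [← hsdef, hsqrt]
    field_simp
    ring
  refine ⟨fun x => ?_, hlam⟩
  have hRb : (R⁻¹ * Bᵀ * P) *ᵥ x = R⁻¹ *ᵥ (x ᵥ* (P * B)) := by
    rw [hb, Matrix.mul_assoc, ← mulVec_mulVec]
  unfold sontagControl
  by_cases h : x ᵥ* (P * B) = 0
  · simp [h, hRb]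
  · rw [if_neg h, hlam x h, hRb]
    simp
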